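/- With G_n defined as a sequence of HNN-type amalgams of surface groups H_i (where H_i = ⟨c_i, d_i, a_i, b_i | c_i d_i [a_i,b_i]=1⟩ and d_j^{t_j} = c_{j+1}), for each 0 ≤ i ≤ n the subgroup H_i is a free factor of G_n. -/

import Mathlib

/-- Generators of `Gₙ`: quadruples `aᵢ, bᵢ, cᵢ, dᵢ` for `0 ≤ i ≤ n`
(encoded as `Fin (n+1) × Fin 4`) together with stable letters `tⱼ` for `0 ≤ j ≤ n-1`. -/
def GGen (n : ℕ) : Type := (Fin (n + 1) × Fin 4) ⊕ Fin n

open scoped commutatorElement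

/-- The relations of `Gₙ`: `cᵢ dᵢ [aᵢ, bᵢ] = 1` for `0 ≤ i ≤ n` and
`tⱼ⁻¹ dⱼ tⱼ = c_{j+1}` for `0 ≤ j ≤ n - 1`. -/
def GRels (n : ℕ) : Set (FreeGroup (GGen n)) :=
  {r | (∃ i : Fin (n + 1),
          r = FreeGroup.of ((Sum.inl (i, 2)) : GGen n) * FreeGroup.of ((Sum.inl (i, 3)) : GGen n) *
              ⁅FreeGroup.of ((Sum.inl (i, 0)) : GGen n), FreeGroup.of ((Sum.inl (i, 1)) : GGen n)⁆) ∨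
       (∃ j : Fin n,
          r = (FreeGroup.of ((Sum.inr j) : GGen n))⁻¹ * FreeGroup.of ((Sum.inl (j.castSucc, 3)) : GGen n) *
              FreeGroup.of ((Sum.inr j) : GGen n) * (FreeGroup.of ((Sum.inl (j.succ, 2)) : GGen n))⁻¹)}

/-- The group `Gₙ`, obtained by gluing the surface groups
`Hᵢ = ⟨cᵢ, dᵢ, aᵢ, bᵢ ∣ cᵢ dᵢ [aᵢ, bᵢ] = 1⟩`, `0 ≤ i ≤ n`,
along boundary curves via `dⱼ^{tⱼ} = c_{j+1}`, `0 ≤ j ≤ n-1`. -/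
abbrev GGrp (n : ℕ) : Type := PresentedGroup (GRels n)

/-- The generator `aᵢ` of `Gₙ`. -/
def Ga (n : ℕ) (i : Fin (n + 1)) : GGrp n := PresentedGroup.of ((Sum.inl (i, 0)) : GGen n)

/-- The generator `bᵢ` of `Gₙ`. -/
def Gb (n : ℕ) (i : Fin (n + 1)) : GGrp n := PresentedGroup.of ((Sum.inl (i, 1)) : GGen n)

/-- The generator `cᵢ` of `Gₙ`. -/
def Gc (n : ℕ) (i : Fin (n + 1)) : GGrp n := PresentedGroup.of ((Sum.inl (i, 2)) : GGen n)

/-- The generator `dᵢ` of `Gₙ`. -/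
def Gd (n : ℕ) (i : Fin (n + 1)) : GGrp n := PresentedGroup.of ((Sum.inl (i, 3)) : GGen n)

/-- The stable letter `tⱼ` of `Gₙ`. -/
def Gt (n : ℕ) (j : Fin n) : GGrp n := PresentedGroup.of ((Sum.inr j) : GGen n)

/-- The canonical copy of the surface group `Hᵢ` inside `Gₙ`,
generated by `aᵢ, bᵢ, cᵢ, dᵢ`. -/
def Hsub (n : ℕ) (i : Fin (n + 1)) : Subgroup (GGrp n) :=
  Subgroup.closure {Ga n i, Gb n i, Gc n i, Gd n i}

/-- `G` is the internal free product of its subgroups `A` and `B`. -/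
def IsFreeProd {G : Type*} [Group G] (A B : Subgroup G) : Prop :=
  Function.Bijective (Monoid.Coprod.lift A.subtype B.subtype)

/-- `A` is a free factor of `G`. -/
def IsFreeFactor {G : Type*} [Group G] (A : Subgroup G) : Prop :=
  ∃ B : Subgroup G, IsFreeProd A B

/-- `G` is the internal free product of its subgroups `A`, `B` and `C`. -/
def IsFreeProd3 {G : Type*} [Group G] (A B C : Subgroup G) : Prop :=
  Function.Bijective (Monoid.CoprodI.lift (fun i : Fin 3 => (![A, B, C] i).subtype))
section Aux
open Subgroup

variable {γ : Type*} (p : γ → Prop) [DecidablePred p]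

theorem isFreeProd_partition :
    IsFreeProd (closure (FreeGroup.of '' {g : γ | p g}))
      (closure (FreeGroup.of '' {g : γ | ¬ p g})) := by
  set A := closure (FreeGroup.of '' {g : γ | p g}) with hA
  set B := closure (FreeGroup.of '' {g : γ | ¬ p g}) with hB
  set F := Monoid.Coprod.lift A.subtype B.subtype with hF
  set Binv : FreeGroup γ →* Monoid.Coprod A B := FreeGroup.lift (fun g =>
    if h : p g then Monoid.Coprod.inl (⟨FreeGroup.of g, subset_closure ⟨g, h, rfl⟩⟩ : A)
    else Monoid.Coprod.inr (⟨FreeGroup.of g, subset_closure ⟨g, h, rfl⟩⟩ : B)) with hBinv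
  have h1 : F.comp Binv = MonoidHom.id _ := by
    apply FreeGroup.ext_hom
    intro a
    simp only [MonoidHom.comp_apply, MonoidHom.id_apply, hBinv, FreeGroup.lift_apply_of]
    by_cases h : p a <;> simp [h, hF]
  have h2 : Binv.comp F = MonoidHom.id _ := by
    apply Monoid.Coprod.hom_ext
    · ext ⟨x, hx⟩
      simp only [MonoidHom.comp_apply, MonoidHom.id_apply]
      rw [hF]
      simp only [Monoid.Coprod.lift_apply_inl, Subgroup.coe_subtype]
      induction hx using Subgroup.closure_induction with
      | mem x hx =>
          obtain ⟨g, hg, rfl⟩ := hx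
          simp only [hBinv, FreeGroup.lift_apply_of]
          first
          | rw [dif_pos (show p g from hg)]
          | rw [dif_neg (show ¬ p g from hg)]
      | one => exact (map_one _).symm
      | mul x y hx hy ihx ihy =>
          rw [map_mul, ihx, ihy, ← map_mul]
          rfl
      | inv x hx ihx =>
          rw [map_inv, ihx, ← map_inv]
          rfl
    · ext ⟨x, hx⟩
      simp only [MonoidHom.comp_apply, MonoidHom.id_apply]
      rw [hF]
      simp only [Monoid.Coprod.lift_apply_inr, Subgroup.coe_subtype]
      induction hx using Subgroup.closure_induction with
      | mem x hx =>
          obtain ⟨g, hg, rfl⟩ := hx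
          simp only [hBinv, FreeGroup.lift_apply_of]
          first
          | rw [dif_pos (show p g from hg)]
          | rw [dif_neg (show ¬ p g from hg)]
      | one => exact (map_one _).symm
      | mul x y hx hy ihx ihy =>
          rw [map_mul, ihx, ihy, ← map_mul]
          rfl
      | inv x hx ihx =>
          rw [map_inv, ihx, ← map_inv]
          rfl
  exact (MonoidHom.toMulEquiv F Binv h2 h1).bijective



theorem coprod_map_equiv_bijective {M N M' N' : Type*} [Monoid M] [Monoid N] [Monoid M'] [Monoid N']
    (eA : M ≃* M') (eB : N ≃* N') :
    Function.Bijective (Monoid.Coprod.map eA.toMonoidHom eB.toMonoidHom) := by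
  apply Function.bijective_iff_has_inverse.mpr
  refine ⟨Monoid.Coprod.map eA.symm.toMonoidHom eB.symm.toMonoidHom, ?_, ?_⟩ <;> intro x <;>
    rw [Monoid.Coprod.map_map] <;>
    · conv_rhs => rw [← MonoidHom.id_apply _ x, ← Monoid.Coprod.map_id_id]
      congr 1 <;> ext y <;> simp

theorem IsFreeProd.map {G G' : Type*} [Group G] [Group G'] {A B : Subgroup G} (e : G ≃* G')
    (h : IsFreeProd A B) :
    IsFreeProd (A.map (e : G →* G')) (B.map (e : G →* G')) := by
  set eA := e.subgroupMap A with heA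
  set eB := e.subgroupMap B with heB
  have key : Monoid.Coprod.lift (A.map (e : G →* G')).subtype (B.map (e : G →* G')).subtype
      = ((e : G →* G').comp (Monoid.Coprod.lift A.subtype B.subtype)).comp
        (Monoid.Coprod.map eA.symm.toMonoidHom eB.symm.toMonoidHom) := by
    apply Monoid.Coprod.hom_ext
    · ext x
      simp only [MonoidHom.comp_apply, Monoid.Coprod.lift_apply_inl, coe_subtype,
        Monoid.Coprod.map_apply_inl, MulEquiv.coe_toMonoidHom, MonoidHom.coe_coe]
      simp [heA]
    · ext x
      simp only [MonoidHom.comp_apply, Monoid.Coprod.lift_apply_inr, coe_subtype,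
        Monoid.Coprod.map_apply_inr, MulEquiv.coe_toMonoidHom, MonoidHom.coe_coe]
      simp [heB]
  rw [IsFreeProd, key, MonoidHom.coe_comp, MonoidHom.coe_comp]
  exact ((e.bijective.comp h).comp (coprod_map_equiv_bijective eA.symm eB.symm))

abbrev FY (n : ℕ) : Type := (Fin (n + 1) × Fin 2) ⊕ Option (Fin n)

def FAn (n j : ℕ) : FreeGroup (FY n) :=
  FreeGroup.of (Sum.inl (⟨j % (n + 1), Nat.mod_lt _ (Nat.succ_pos n)⟩, 0))

def FBn (n j : ℕ) : FreeGroup (FY n) :=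
  FreeGroup.of (Sum.inl (⟨j % (n + 1), Nat.mod_lt _ (Nat.succ_pos n)⟩, 1))

def FTn (n j : ℕ) : FreeGroup (FY n) :=
  if h : j < n then FreeGroup.of (Sum.inr (some ⟨j, h⟩)) else 1

def Fbase (n : ℕ) : FreeGroup (FY n) := FreeGroup.of (Sum.inr none)

def FKn (n j : ℕ) : FreeGroup (FY n) := ⁅FAn n j, FBn n j⁆

/-- `d` as a function of `c`. -/
def FDof (n : ℕ) (x : FreeGroup (FY n)) (j : ℕ) : FreeGroup (FY n) := x⁻¹ * (FKn n j)⁻¹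

def nextC (n : ℕ) (x : FreeGroup (FY n)) (j : ℕ) : FreeGroup (FY n) :=
  (FTn n j)⁻¹ * FDof n x j * FTn n j

def prevC (n : ℕ) (y : FreeGroup (FY n)) (j : ℕ) : FreeGroup (FY n) :=
  (FKn n j)⁻¹ * FTn n j * y⁻¹ * (FTn n j)⁻¹

theorem nextC_prevC (n : ℕ) (y : FreeGroup (FY n)) (j : ℕ) :
    nextC n (prevC n y j) j = y := by
  unfold nextC prevC FDof
  group

def upC (n i : ℕ) : ℕ → FreeGroup (FY n)
  | 0 => Fbase n
  | (k+1) => nextC n (upC n i k) (i + k)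

def dnC (n i : ℕ) : ℕ → FreeGroup (FY n)
  | 0 => Fbase n
  | (k+1) => prevC n (dnC n i k) (i - (k+1))

def Cn (n i j : ℕ) : FreeGroup (FY n) :=
  if i ≤ j then upC n i (j - i) else dnC n i (i - j)

theorem Cn_self (n i : ℕ) : Cn n i i = Fbase n := by
  simp [Cn, upC]

theorem Cn_succ (n i j : ℕ) : Cn n i (j + 1) = nextC n (Cn n i j) j := by
  rcases le_or_gt i j with h | h
  · rw [Cn, if_pos (h.trans (Nat.le_succ _)), Cn, if_pos h]
    have h1 : j + 1 - i = (j - i) + 1 := by omega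
    rw [h1, upC]
    congr 1
    omega
  · have h1 : Cn n i j = prevC n (Cn n i (j + 1)) j := by
      rw [Cn, if_neg (not_le.mpr h)]
      have hk : i - j = (i - (j + 1)) + 1 := by omega
      rw [hk, dnC]
      congr 1
      · rw [Cn]
        split
        · have e1 : j + 1 - i = 0 := by omega
          have e2 : i - (j + 1) = 0 := by omega
          rw [e1, e2, upC, dnC]
        · rfl
      · omega
    rw [h1, nextC_prevC]

theorem Grels_eq_one (n : ℕ) {r : FreeGroup (GGen n)} (hr : r ∈ GRels n) :
    PresentedGroup.mk (GRels n) r = 1 := by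
  apply (QuotientGroup.eq_one_iff _).mpr
  exact Subgroup.subset_normalClosure hr

theorem Grel1 (n : ℕ) (j : Fin (n + 1)) :
    Gc n j * Gd n j * ⁅Ga n j, Gb n j⁆ = 1 := by
  have h := Grels_eq_one n (Or.inl ⟨j, rfl⟩)
  erw [map_mul, map_mul, map_commutatorElement] at h
  exact h

theorem Grel2 (n : ℕ) (j : Fin n) :
    (Gt n j)⁻¹ * Gd n j.castSucc * Gt n j = Gc n j.succ := by
  have h := Grels_eq_one n (Or.inr ⟨j, rfl⟩)
  erw [map_mul, map_mul, map_mul, map_inv, map_inv] at h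
  have h2 := mul_eq_one_iff_eq_inv.mp h
  show (PresentedGroup.mk (GRels n) (FreeGroup.of (Sum.inr j)))⁻¹ *
      PresentedGroup.mk (GRels n) (FreeGroup.of (Sum.inl (j.castSucc, 3))) *
      PresentedGroup.mk (GRels n) (FreeGroup.of (Sum.inr j)) =
      PresentedGroup.mk (GRels n) (FreeGroup.of (Sum.inl (j.succ, 2)))
  erw [h2, inv_inv]
  rfl

theorem Gd_eq (n : ℕ) (j : Fin (n + 1)) :
    Gd n j = (Gc n j)⁻¹ * ⁅Ga n j, Gb n j⁆⁻¹ := by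
  have h := Grel1 n j
  have h2 : (Gc n j)⁻¹ * (Gc n j * Gd n j * ⁅Ga n j, Gb n j⁆) * ⁅Ga n j, Gb n j⁆⁻¹
      = Gd n j := by group
  rw [← h2, h, mul_one]

def fgen (n : ℕ) (i : Fin (n + 1)) : GGen n → FreeGroup (FY n)
  | Sum.inl p => ![FAn n p.1.val, FBn n p.1.val, Cn n i.val p.1.val,
                   FDof n (Cn n i.val p.1.val) p.1.val] p.2
  | Sum.inr j => FTn n j.val

theorem hrels (n : ℕ) (i : Fin (n + 1)) :
    ∀ r ∈ GRels n, FreeGroup.lift (fgen n i) r = 1 := by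
  rintro r (⟨j, rfl⟩ | ⟨j, rfl⟩)
  · delta GGen
    simp only [map_mul, map_commutatorElement]
    erw [FreeGroup.lift_apply_of, FreeGroup.lift_apply_of, FreeGroup.lift_apply_of, FreeGroup.lift_apply_of]
    show Cn n i.val j.val * FDof n (Cn n i.val j.val) j.val *
      ⁅FAn n j.val, FBn n j.val⁆ = 1
    unfold FDof FKn
    group
  · delta GGen
    simp only [map_mul, map_inv]
    erw [FreeGroup.lift_apply_of, FreeGroup.lift_apply_of, FreeGroup.lift_apply_of]
    show (FTn n j.val)⁻¹ * FDof n (Cn n i.val j.val) j.val * FTn n j.val *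
      (Cn n i.val (j.val + 1))⁻¹ = 1
    rw [Cn_succ]
    unfold nextC
    group

def phiG (n : ℕ) (i : Fin (n + 1)) : GGrp n →* FreeGroup (FY n) :=
  PresentedGroup.toGroup (hrels n i)

def ggen (n : ℕ) (i : Fin (n + 1)) : FY n → GGrp n
  | Sum.inl p => ![Ga n p.1, Gb n p.1] p.2
  | Sum.inr none => Gc n i
  | Sum.inr (some j) => Gt n j

def psiG (n : ℕ) (i : Fin (n + 1)) : FreeGroup (FY n) →* GGrp n :=
  FreeGroup.lift (ggen n i)

theorem Grel2' (n : ℕ) (j : ℕ) (h : j < n) :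
    (Gt n ⟨j, h⟩)⁻¹ * Gd n ⟨j, by omega⟩ * Gt n ⟨j, h⟩ = Gc n ⟨j + 1, by omega⟩ :=
  Grel2 n ⟨j, h⟩

theorem psi_FAn (n : ℕ) (i : Fin (n + 1)) (j : ℕ) (h : j < n + 1) :
    psiG n i (FAn n j) = Ga n ⟨j, h⟩ := by
  unfold psiG FAn
  rw [FreeGroup.lift_apply_of]
  show Ga n ⟨j % (n + 1), _⟩ = Ga n ⟨j, h⟩
  congr 1
  exact Fin.ext (Nat.mod_eq_of_lt h)

theorem psi_FBn (n : ℕ) (i : Fin (n + 1)) (j : ℕ) (h : j < n + 1) :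
    psiG n i (FBn n j) = Gb n ⟨j, h⟩ := by
  unfold psiG FBn
  rw [FreeGroup.lift_apply_of]
  show Gb n ⟨j % (n + 1), _⟩ = Gb n ⟨j, h⟩
  congr 1
  exact Fin.ext (Nat.mod_eq_of_lt h)

theorem psi_FKn (n : ℕ) (i : Fin (n + 1)) (j : ℕ) (h : j < n + 1) :
    psiG n i (FKn n j) = ⁅Ga n ⟨j, h⟩, Gb n ⟨j, h⟩⁆ := by
  unfold FKn
  rw [map_commutatorElement, psi_FAn n i j h, psi_FBn n i j h]

theorem psi_FTn (n : ℕ) (i : Fin (n + 1)) (j : ℕ) (h : j < n) :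
    psiG n i (FTn n j) = Gt n ⟨j, h⟩ := by
  unfold psiG FTn
  rw [dif_pos h, FreeGroup.lift_apply_of]
  rfl

theorem psi_Fbase (n : ℕ) (i : Fin (n + 1)) :
    psiG n i (Fbase n) = Gc n i := by
  unfold psiG Fbase
  rw [FreeGroup.lift_apply_of]
  rfl

theorem psi_upC (n : ℕ) (i : Fin (n + 1)) :
    ∀ k (hk : i.val + k < n + 1), psiG n i (upC n i.val k) = Gc n ⟨i.val + k, hk⟩
  | 0, hk => by
      rw [upC, psi_Fbase]
      congr 1
  | (k+1), hk => by
      have hn : i.val + k < n := by omega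
      show psiG n i (nextC n (upC n i.val k) (i.val + k)) = _
      unfold nextC FDof
      simp only [map_mul, map_inv]
      rw [psi_upC n i k (by omega), psi_FKn n i _ (by omega), psi_FTn n i _ hn]
      rw [← Gd_eq n ⟨i.val + k, by omega⟩]
      rw [Grel2' n (i.val + k) hn]
      exact congrArg (Gc n) (Fin.ext (show i.val + k + 1 = i.val + (k + 1) by omega))

theorem psi_dnC (n : ℕ) (i : Fin (n + 1)) :
    ∀ k (hk : k ≤ i.val), psiG n i (dnC n i.val k) = Gc n ⟨i.val - k, by omega⟩
  | 0, hk => by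
      rw [dnC, psi_Fbase]
      congr 1
  | (k+1), hk => by
      have hn : i.val - (k+1) < n := by omega
      show psiG n i (prevC n (dnC n i.val k) (i.val - (k+1))) = Gc n ⟨i.val - (k+1), by omega⟩
      unfold prevC
      simp only [map_mul, map_inv]
      rw [psi_dnC n i k (by omega), psi_FKn n i _ (by omega), psi_FTn n i _ hn]
      have hgc : Gc n (⟨i.val - k, by omega⟩ : Fin (n+1)) =
          (Gt n ⟨i.val - (k+1), hn⟩)⁻¹ * Gd n ⟨i.val - (k+1), by omega⟩ *
            Gt n ⟨i.val - (k+1), hn⟩ := by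
        rw [Grel2' n (i.val - (k+1)) hn]
        congr 1
        exact Fin.ext (show i.val - k = i.val - (k+1) + 1 by omega)
      rw [hgc, Gd_eq n ⟨i.val - (k+1), by omega⟩]
      simp only [commutatorElement_def]
      group

theorem psi_Cn (n : ℕ) (i : Fin (n + 1)) (j : ℕ) (hj : j < n + 1) :
    psiG n i (Cn n i.val j) = Gc n ⟨j, hj⟩ := by
  rcases le_or_gt i.val j with h | h
  · rw [Cn, if_pos h, psi_upC n i (j - i.val) (by omega)]
    congr 1
    exact Fin.ext (show i.val + (j - i.val) = j by omega)
  · rw [Cn, if_neg (not_le.mpr h), psi_dnC n i (i.val - j) (by omega)]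
    congr 1
    exact Fin.ext (show i.val - (i.val - j) = j by omega)

theorem psi_phi (n : ℕ) (i : Fin (n + 1)) :
    (psiG n i).comp (phiG n i) = MonoidHom.id (GGrp n) := by
  apply PresentedGroup.ext
  intro x
  simp only [MonoidHom.comp_apply, MonoidHom.id_apply]
  rw [show phiG n i (PresentedGroup.of x) = fgen n i x from
    PresentedGroup.toGroup.of (hrels n i)]
  rcases x with (⟨j, k⟩ | j)
  · fin_cases k
    · exact psi_FAn n i j.val j.isLt
    · exact psi_FBn n i j.val j.isLt
    · exact psi_Cn n i j.val j.isLt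
    · show psiG n i (FDof n (Cn n i.val j.val) j.val) = Gd n j
      unfold FDof
      simp only [map_mul, map_inv]
      rw [psi_Cn n i j.val j.isLt, psi_FKn n i j.val j.isLt,
        ← Gd_eq n ⟨j.val, j.isLt⟩]
  · exact psi_FTn n i j.val j.isLt

theorem phi_psi (n : ℕ) (i : Fin (n + 1)) :
    (phiG n i).comp (psiG n i) = MonoidHom.id (FreeGroup (FY n)) := by
  apply FreeGroup.ext_hom
  intro y
  simp only [MonoidHom.comp_apply, MonoidHom.id_apply]
  rw [show psiG n i (FreeGroup.of y) = ggen n i y from FreeGroup.lift_apply_of]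
  rcases y with (⟨j, k⟩ | _ | j)
  · fin_cases k
    · show phiG n i (Ga n j) = FreeGroup.of (Sum.inl (j, 0))
      rw [show phiG n i (Ga n j) = FAn n j.val from PresentedGroup.toGroup.of (hrels n i)]
      unfold FAn
      rw [show (⟨j.val % (n + 1), Nat.mod_lt _ (Nat.succ_pos n)⟩ : Fin (n + 1)) = j from
        Fin.ext (Nat.mod_eq_of_lt j.isLt)]
    · show phiG n i (Gb n j) = FreeGroup.of (Sum.inl (j, 1))
      rw [show phiG n i (Gb n j) = FBn n j.val from PresentedGroup.toGroup.of (hrels n i)]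
      unfold FBn
      rw [show (⟨j.val % (n + 1), Nat.mod_lt _ (Nat.succ_pos n)⟩ : Fin (n + 1)) = j from
        Fin.ext (Nat.mod_eq_of_lt j.isLt)]
  · show phiG n i (Gc n i) = FreeGroup.of (Sum.inr none)
    rw [show phiG n i (Gc n i) = Cn n i.val i.val from PresentedGroup.toGroup.of (hrels n i)]
    rw [Cn_self]
    rfl
  · show phiG n i (Gt n j) = FreeGroup.of (Sum.inr (some j))
    rw [show phiG n i (Gt n j) = FTn n j.val from PresentedGroup.toGroup.of (hrels n i)]
    unfold FTn
    rw [dif_pos j.isLt]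

def isoG (n : ℕ) (i : Fin (n + 1)) : GGrp n ≃* FreeGroup (FY n) :=
  MonoidHom.toMulEquiv (phiG n i) (psiG n i) (psi_phi n i) (phi_psi n i)

end Aux

/-- For each `0 ≤ i ≤ n`, the subgroup `Hᵢ` is a free factor of `Gₙ`. -/
theorem Hsub_isFreeFactor (n : ℕ) (i : Fin (n + 1)) : IsFreeFactor (Hsub n i) := by
  classical
  set e := isoG n i with he
  set p : FY n → Prop := fun y => y = Sum.inl (i, 0) ∨ y = Sum.inl (i, 1) ∨ y = Sum.inr none
    with hp
  have hfp := (isFreeProd_partition p).map e.symm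
  have hA : (Subgroup.closure (FreeGroup.of '' {g : FY n | p g})).map
      (e.symm : FreeGroup (FY n) →* GGrp n) = Hsub n i := by
    rw [MonoidHom.map_closure]
    have hset : {g : FY n | p g} =
        {Sum.inl (i, 0), Sum.inl (i, 1), Sum.inr none} := rfl
    rw [hset]
    simp only [Set.image_insert_eq, Set.image_singleton]
    have e0 : (e.symm : FreeGroup (FY n) →* GGrp n) (FreeGroup.of (Sum.inl (i, 0)))
        = Ga n i := by
      show psiG n i (FreeGroup.of (Sum.inl (i, 0))) = Ga n i
      rw [show psiG n i (FreeGroup.of (Sum.inl (i, 0))) = ggen n i (Sum.inl (i, 0)) from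
        FreeGroup.lift_apply_of]
      rfl
    have e1 : (e.symm : FreeGroup (FY n) →* GGrp n) (FreeGroup.of (Sum.inl (i, 1)))
        = Gb n i := by
      show psiG n i (FreeGroup.of (Sum.inl (i, 1))) = Gb n i
      rw [show psiG n i (FreeGroup.of (Sum.inl (i, 1))) = ggen n i (Sum.inl (i, 1)) from
        FreeGroup.lift_apply_of]
      rfl
    have e2 : (e.symm : FreeGroup (FY n) →* GGrp n) (FreeGroup.of (Sum.inr none))
        = Gc n i := by
      show psiG n i (FreeGroup.of (Sum.inr none)) = Gc n i
      rw [show psiG n i (FreeGroup.of (Sum.inr none)) = ggen n i (Sum.inr none) from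
        FreeGroup.lift_apply_of]
      rfl
    rw [e0, e1, e2]
    apply le_antisymm
    · apply Subgroup.closure_mono
      intro x hx
      simp only [Set.mem_insert_iff, Set.mem_singleton_iff] at hx ⊢
      tauto
    · rw [Hsub, Subgroup.closure_le]
      intro x hx
      simp only [Set.mem_insert_iff, Set.mem_singleton_iff] at hx
      have ha : Ga n i ∈ Subgroup.closure {Ga n i, Gb n i, Gc n i} :=
        Subgroup.subset_closure (by simp)
      have hb : Gb n i ∈ Subgroup.closure {Ga n i, Gb n i, Gc n i} :=
        Subgroup.subset_closure (by simp)
      have hc : Gc n i ∈ Subgroup.closure {Ga n i, Gb n i, Gc n i} :=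
        Subgroup.subset_closure (by simp)
      rcases hx with rfl | rfl | rfl | rfl
      · exact ha
      · exact hb
      · exact hc
      · rw [Gd_eq, commutatorElement_def]
        exact mul_mem (inv_mem hc)
          (inv_mem (mul_mem (mul_mem (mul_mem ha hb) (inv_mem ha)) (inv_mem hb)))
  rw [hA] at hfp
  exact ⟨_, hfp⟩
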